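/- Under the mixture setup, the expected multiplicative overlap-adaptive regularization function is bounded by a product of chi-square-type divergence terms: ∫ (1/(4·π(x)·(1−π(x))) − 1) dμ(x) ≤ (1/(4·π₀·π₁)) · sqrt(∫ ((dμ/dν₀)(x))² dμ(x)) · sqrt(∫ ((dμ/dν₁)(x))² dμ(x)), assuming the integrals on the right-hand side are finite. -/

import Mathlib

open MeasureTheory

/-- Proposition 1 (multiplicative case): under the mixture setup, the expected
multiplicative overlap-adaptive regularization function is bounded by a product of
chi-square-type divergence terms. -/
theorem oar_multiplicative_bound
    {X : Type*} [MeasurableSpace X]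
    (ν₀ ν₁ : Measure X) [IsProbabilityMeasure ν₀] [IsProbabilityMeasure ν₁]
    (π₀ π₁ : ℝ) (hπ₀ : 0 < π₀) (hπ₀' : π₀ < 1) (hπ₁ : 0 < π₁) (hπ₁' : π₁ < 1)
    (hsum : π₀ + π₁ = 1)
    (μ : Measure X)
    (hμ : μ = ENNReal.ofReal π₀ • ν₀ + ENNReal.ofReal π₁ • ν₁)
    (hac₀ : μ ≪ ν₀) (hac₁ : μ ≪ ν₁) (hac₀' : ν₀ ≪ μ) (hac₁' : ν₁ ≪ μ)
    (hpos₀ : ∀ᵐ x ∂μ, 0 < (ν₀.rnDeriv μ x).toReal)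
    (hpos₁ : ∀ᵐ x ∂μ, 0 < (ν₁.rnDeriv μ x).toReal)
    (prop : X → ℝ)
    (hprop : ∀ᵐ x ∂μ, prop x = π₁ * (ν₁.rnDeriv μ x).toReal)
    (hprop' : ∀ᵐ x ∂μ, 1 - prop x = π₀ * (ν₀.rnDeriv μ x).toReal)
    (hint₀ : Integrable (fun x => ((μ.rnDeriv ν₀ x).toReal) ^ 2) μ)
    (hint₁ : Integrable (fun x => ((μ.rnDeriv ν₁ x).toReal) ^ 2) μ) :
    ∫ x, (1 / (4 * prop x * (1 - prop x)) - 1) ∂μ ≤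
      (1 / (4 * π₀ * π₁)) *
        Real.sqrt (∫ x, ((μ.rnDeriv ν₀ x).toReal) ^ 2 ∂μ) *
        Real.sqrt (∫ x, ((μ.rnDeriv ν₁ x).toReal) ^ 2 ∂μ) := by
  have hμfin : IsFiniteMeasure μ := by
    constructor
    rw [hμ]
    simp only [Measure.add_apply, Measure.smul_apply, smul_eq_mul, measure_univ, mul_one]
    exact ENNReal.add_lt_top.mpr ⟨ENNReal.ofReal_lt_top, ENNReal.ofReal_lt_top⟩
  set g₀ : X → ℝ := fun x => (μ.rnDeriv ν₀ x).toReal with hg₀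
  set g₁ : X → ℝ := fun x => (μ.rnDeriv ν₁ x).toReal with hg₁
  have hc : (0:ℝ) < 1 / (4 * π₀ * π₁) := by positivity
  -- inverse relations: g_a * f_a = 1 a.e.
  have hinv₀ : ∀ᵐ x ∂μ, g₀ x * (ν₀.rnDeriv μ x).toReal = 1 := by
    have h1 : (fun x => μ.rnDeriv ν₀ x * ν₀.rnDeriv μ x) =ᵐ[μ] μ.rnDeriv μ :=
      Measure.rnDeriv_mul_rnDeriv hac₀
    have h2 : μ.rnDeriv μ =ᵐ[μ] 1 := Measure.rnDeriv_self μ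
    filter_upwards [h1, h2] with x hx1 hx2
    simp only [hg₀, ← ENNReal.toReal_mul, hx1, hx2, Pi.one_apply, ENNReal.toReal_one]
  have hinv₁ : ∀ᵐ x ∂μ, g₁ x * (ν₁.rnDeriv μ x).toReal = 1 := by
    have h1 : (fun x => μ.rnDeriv ν₁ x * ν₁.rnDeriv μ x) =ᵐ[μ] μ.rnDeriv μ :=
      Measure.rnDeriv_mul_rnDeriv hac₁
    have h2 : μ.rnDeriv μ =ᵐ[μ] 1 := Measure.rnDeriv_self μ
    filter_upwards [h1, h2] with x hx1 hx2
    simp only [hg₁, ← ENNReal.toReal_mul, hx1, hx2, Pi.one_apply, ENNReal.toReal_one]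
  -- pointwise identity for the integrand
  have hptw : ∀ᵐ x ∂μ, 1 / (4 * prop x * (1 - prop x)) - 1
      = (1 / (4 * π₀ * π₁)) * (g₀ x * g₁ x) - 1 := by
    filter_upwards [hprop, hprop', hpos₀, hpos₁, hinv₀, hinv₁] with x h1 h2 h3 h4 h5 h6
    rw [h2, h1]
    have hf₀ : (ν₀.rnDeriv μ x).toReal ≠ 0 := ne_of_gt h3
    have hf₁ : (ν₁.rnDeriv μ x).toReal ≠ 0 := ne_of_gt h4
    have e₀ : g₀ x = ((ν₀.rnDeriv μ x).toReal)⁻¹ := eq_inv_of_mul_eq_one_left h5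
    have e₁ : g₁ x = ((ν₁.rnDeriv μ x).toReal)⁻¹ := eq_inv_of_mul_eq_one_left h6
    rw [e₀, e₁]
    field_simp
  -- measurability and nonnegativity of g₀, g₁
  have hm₀ : AEStronglyMeasurable g₀ μ :=
    (Measure.measurable_rnDeriv μ ν₀).ennreal_toReal.aestronglyMeasurable
  have hm₁ : AEStronglyMeasurable g₁ μ :=
    (Measure.measurable_rnDeriv μ ν₁).ennreal_toReal.aestronglyMeasurable
  have hnn₀ : ∀ x, 0 ≤ g₀ x := fun x => ENNReal.toReal_nonneg
  have hnn₁ : ∀ x, 0 ≤ g₁ x := fun x => ENNReal.toReal_nonneg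
  -- integrability of the product
  have hmul : Integrable (fun x => g₀ x * g₁ x) μ := by
    refine Integrable.mono' (((hint₀.add hint₁).div_const 2)) (hm₀.mul hm₁) ?_
    filter_upwards with x
    rw [Real.norm_of_nonneg (mul_nonneg (hnn₀ x) (hnn₁ x))]
    simp only [Pi.add_apply]
    nlinarith [sq_nonneg (g₀ x - g₁ x)]
  -- Cauchy–Schwarz
  have hL₀ : MemLp g₀ 2 μ := (memLp_two_iff_integrable_sq hm₀).mpr hint₀
  have hL₁ : MemLp g₁ 2 μ := (memLp_two_iff_integrable_sq hm₁).mpr hint₁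
  have hCS : ∫ x, g₀ x * g₁ x ∂μ ≤
      Real.sqrt (∫ x, g₀ x ^ 2 ∂μ) * Real.sqrt (∫ x, g₁ x ^ 2 ∂μ) := by
    have hpq : (2:ℝ).HolderConjugate 2 := Real.HolderConjugate.two_two
    have h2e : ((2 : ENNReal)) = ENNReal.ofReal (2:ℝ) := by norm_num
    have h := integral_mul_le_Lp_mul_Lq_of_nonneg (p := 2) (q := 2) hpq
      (Filter.Eventually.of_forall hnn₀) (Filter.Eventually.of_forall hnn₁)
      (h2e ▸ hL₀) (h2e ▸ hL₁)
    have e₀ : ∫ x, g₀ x ^ (2:ℝ) ∂μ = ∫ x, g₀ x ^ 2 ∂μ := by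
      refine integral_congr_ae (Filter.Eventually.of_forall fun x => ?_)
      beta_reduce
      rw [← Real.rpow_natCast _ 2]
      norm_num
    have e₁ : ∫ x, g₁ x ^ (2:ℝ) ∂μ = ∫ x, g₁ x ^ 2 ∂μ := by
      refine integral_congr_ae (Filter.Eventually.of_forall fun x => ?_)
      beta_reduce
      rw [← Real.rpow_natCast _ 2]
      norm_num
    rw [e₀, e₁] at h
    calc ∫ x, g₀ x * g₁ x ∂μ
        ≤ (∫ x, g₀ x ^ 2 ∂μ) ^ ((1:ℝ)/2) * (∫ x, g₁ x ^ 2 ∂μ) ^ ((1:ℝ)/2) := h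
      _ = Real.sqrt (∫ x, g₀ x ^ 2 ∂μ) * Real.sqrt (∫ x, g₁ x ^ 2 ∂μ) := by
          rw [Real.sqrt_eq_rpow, Real.sqrt_eq_rpow]
  -- put everything together
  have hre : ∫ x, (1 / (4 * prop x * (1 - prop x)) - 1) ∂μ
      = (1 / (4 * π₀ * π₁)) * ∫ x, g₀ x * g₁ x ∂μ - (μ Set.univ).toReal := by
    rw [integral_congr_ae hptw, integral_sub (hmul.const_mul _) (integrable_const 1),
      integral_const, integral_const_mul, smul_eq_mul, mul_one, measureReal_def]
  rw [hre]
  have h4 : (1 / (4 * π₀ * π₁)) * ∫ x, g₀ x * g₁ x ∂μ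
      ≤ (1 / (4 * π₀ * π₁)) * (Real.sqrt (∫ x, g₀ x ^ 2 ∂μ) * Real.sqrt (∫ x, g₁ x ^ 2 ∂μ)) :=
    mul_le_mul_of_nonneg_left hCS hc.le
  rw [← mul_assoc] at h4
  have hnn : (0:ℝ) ≤ (μ Set.univ).toReal := ENNReal.toReal_nonneg
  linarith
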